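/- Let (u,v) : I → ℝ² be a C² solution of the Levi-Civita regularized RTBP system on an interval I on which r₂ > 0. Then the function s ↦ u′(s)² + v′(s)² − W(u(s),v(s)) is constant on I, where W(u,v) = 4(u²+v²)[(1−μ)(u²+v²)² + μ((1+u²−v²)² + 4u²v²)] + 8(1−μ) + 8μ(u²+v²)/r₂ − 4C(u²+v²). In particular, if a solution satisfies u′² + v′² = W(u,v) at some time and u(s₀) = v(s₀) = 0 at some time s₀ ∈ I, then u′(s₀)² + v′(s₀)² = 8(1−μ). -/

import Mathlib

open Real Set

noncomputable section

/-- The distance `r₂` to the second primary in Levi-Civita coordinates. -/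
def lcR2 (u v : ℝ) : ℝ := Real.sqrt ((1+u^2-v^2)^2 + 4*u^2*v^2)

/-- `(u,v)` is a solution of the Levi-Civita regularized RTBP system on `I`. -/
def IsLCSolOn (μ C : ℝ) (u v : ℝ → ℝ) (I : Set ℝ) : Prop :=
  ∀ s ∈ I,
    (DifferentiableAt ℝ u s ∧ DifferentiableAt ℝ v s ∧
     DifferentiableAt ℝ (deriv u) s ∧ DifferentiableAt ℝ (deriv v) s) ∧
    deriv (deriv u) s - 8*((u s)^2+(v s)^2)*(deriv v s) =
      4*μ*u s + 16*μ*(u s)^3 + 12*((u s)^2+(v s)^2)^2*(u s)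
      + 8*μ*(u s)/lcR2 (u s) (v s)
      - 8*μ*(u s)*((u s)^2+(v s)^2)*((u s)^2+(v s)^2+1)/(lcR2 (u s) (v s))^3
      - 4*C*(u s) ∧
    deriv (deriv v) s + 8*((u s)^2+(v s)^2)*(deriv u s) =
      4*μ*v s - 16*μ*(v s)^3 + 12*((u s)^2+(v s)^2)^2*(v s)
      + 8*μ*(v s)/lcR2 (u s) (v s)
      - 8*μ*(v s)*((u s)^2+(v s)^2)*((u s)^2+(v s)^2-1)/(lcR2 (u s) (v s))^3
      - 4*C*(v s)

/-- The function `W(u,v)` appearing in the regularized Jacobi integral. -/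
def W (μ C u v : ℝ) : ℝ :=
  4*(u^2+v^2)*((1-μ)*(u^2+v^2)^2 + μ*((1+u^2-v^2)^2+4*u^2*v^2))
  + 8*(1-μ) + 8*μ*(u^2+v^2)/lcR2 u v - 4*C*(u^2+v^2)

/-- Derivative of `W` along a differentiable path where `r₂ > 0`. -/
lemma hasDerivAt_W_comp (μ C : ℝ) (u v : ℝ → ℝ) (s : ℝ)
    (hud : DifferentiableAt ℝ u s) (hvd : DifferentiableAt ℝ v s)
    (hrpos : 0 < lcR2 (u s) (v s)) :
    HasDerivAt (fun t => W μ C (u t) (v t))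
      ((4*(2*(u s)*(deriv u s) + 2*(v s)*(deriv v s)))*((1-μ)*((u s)^2+(v s)^2)^2 + μ*((1+(u s)^2-(v s)^2)^2+4*(u s)^2*(v s)^2))
       + (4*((u s)^2+(v s)^2))*((1-μ)*(2*((u s)^2+(v s)^2)*(2*(u s)*(deriv u s) + 2*(v s)*(deriv v s))) + μ*(2*(1+(u s)^2-(v s)^2)*(2*(u s)*(deriv u s) - 2*(v s)*(deriv v s)) + (4*(2*(u s)*(deriv u s))*(v s)^2 + 4*(u s)^2*(2*(v s)*(deriv v s)))))
       + ((8*μ*(2*(u s)*(deriv u s) + 2*(v s)*(deriv v s))) * lcR2 (u s) (v s)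
          - (8*μ*((u s)^2+(v s)^2)) * ((2*(1+(u s)^2-(v s)^2)*(2*(u s)*(deriv u s) - 2*(v s)*(deriv v s)) + (4*(2*(u s)*(deriv u s))*(v s)^2 + 4*(u s)^2*(2*(v s)*(deriv v s)))) / (2 * lcR2 (u s) (v s)))) / (lcR2 (u s) (v s))^2
       - 4*C*(2*(u s)*(deriv u s) + 2*(v s)*(deriv v s))) s := by
  set a := u s with ha
  set b := v s with hb
  set a' := deriv u s
  set b' := deriv v s
  have hu : HasDerivAt u a' s := hud.hasDerivAt
  have hv : HasDerivAt v b' s := hvd.hasDerivAt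
  have hgpos : (0:ℝ) < (1+a^2-b^2)^2 + 4*a^2*b^2 := by
    have := hrpos
    rw [lcR2, Real.sqrt_pos] at this
    exact this
  have hgne : ((1+a^2-b^2)^2 + 4*a^2*b^2) ≠ 0 := ne_of_gt hgpos
  have hrne : lcR2 a b ≠ 0 := ne_of_gt hrpos
  have hu2 : HasDerivAt (fun t => (u t)^2) (2*a*a') s := by
    simpa using hu.fun_pow 2
  have hv2 : HasDerivAt (fun t => (v t)^2) (2*b*b') s := by
    simpa using hv.fun_pow 2
  have hq : HasDerivAt (fun t => (u t)^2 + (v t)^2) (2*a*a' + 2*b*b') s := hu2.add hv2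
  have h1 : HasDerivAt (fun t => 1+(u t)^2-(v t)^2) (2*a*a' - 2*b*b') s := by
    simpa using ((hasDerivAt_const s (1:ℝ)).fun_add hu2).fun_sub hv2
  have h2 : HasDerivAt (fun t => (1+(u t)^2-(v t)^2)^2)
      (2*(1+a^2-b^2)*(2*a*a' - 2*b*b')) s := by
    simpa [mul_comm, mul_assoc] using h1.fun_pow 2
  have h3 : HasDerivAt (fun t => 4*(u t)^2*(v t)^2)
      (4*(2*a*a')*b^2 + 4*a^2*(2*b*b')) s := by
    have := (hu2.const_mul (4:ℝ)).fun_mul hv2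
    convert this using 1 <;> ring
  have hg : HasDerivAt (fun t => (1+(u t)^2-(v t)^2)^2 + 4*(u t)^2*(v t)^2)
      (2*(1+a^2-b^2)*(2*a*a' - 2*b*b') + (4*(2*a*a')*b^2 + 4*a^2*(2*b*b'))) s :=
    h2.add h3
  have hR : HasDerivAt (fun t => lcR2 (u t) (v t))
      ((2*(1+a^2-b^2)*(2*a*a' - 2*b*b') + (4*(2*a*a')*b^2 + 4*a^2*(2*b*b'))) / (2 * lcR2 a b)) s := by
    have := hg.sqrt hgne
    simpa [lcR2] using this
  have hq2 : HasDerivAt (fun t => ((u t)^2+(v t)^2)^2)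
      (2*((a^2+b^2))*(2*a*a' + 2*b*b')) s := by
    simpa [mul_comm, mul_assoc] using hq.fun_pow 2
  have hA : HasDerivAt (fun t => (1-μ)*((u t)^2+(v t)^2)^2 + μ*((1+(u t)^2-(v t)^2)^2+4*(u t)^2*(v t)^2))
      ((1-μ)*(2*(a^2+b^2)*(2*a*a' + 2*b*b')) + μ*(2*(1+a^2-b^2)*(2*a*a' - 2*b*b') + (4*(2*a*a')*b^2 + 4*a^2*(2*b*b')))) s :=
    (hq2.const_mul (1-μ)).add (hg.const_mul μ)
  have ht1 : HasDerivAt (fun t => 4*((u t)^2+(v t)^2)*((1-μ)*((u t)^2+(v t)^2)^2 + μ*((1+(u t)^2-(v t)^2)^2+4*(u t)^2*(v t)^2)))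
      ((4*(2*a*a' + 2*b*b'))*((1-μ)*(a^2+b^2)^2 + μ*((1+a^2-b^2)^2+4*a^2*b^2))
       + (4*(a^2+b^2))*((1-μ)*(2*(a^2+b^2)*(2*a*a' + 2*b*b')) + μ*(2*(1+a^2-b^2)*(2*a*a' - 2*b*b') + (4*(2*a*a')*b^2 + 4*a^2*(2*b*b'))))) s := by
    have := (hq.const_mul (4:ℝ)).fun_mul hA
    convert this using 1 <;> ring
  have ht3 : HasDerivAt (fun t => 8*μ*((u t)^2+(v t)^2)/lcR2 (u t) (v t))
      (((8*μ*(2*a*a' + 2*b*b')) * lcR2 a b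
        - (8*μ*(a^2+b^2)) * ((2*(1+a^2-b^2)*(2*a*a' - 2*b*b') + (4*(2*a*a')*b^2 + 4*a^2*(2*b*b'))) / (2 * lcR2 a b))) / (lcR2 a b)^2) s := by
    have h8 : HasDerivAt (fun t => 8*μ*((u t)^2+(v t)^2)) (8*μ*(2*a*a' + 2*b*b')) s := by
      have := hq.const_mul (8*μ)
      convert this using 1 <;> ring
    exact h8.div hR hrne
  have ht4 : HasDerivAt (fun t => 4*C*((u t)^2+(v t)^2)) (4*C*(2*a*a' + 2*b*b')) s := by
    have := hq.const_mul (4*C)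
    convert this using 1 <;> ring
  have := ((ht1.fun_add (hasDerivAt_const s (8*(1-μ)))).fun_add ht3).fun_sub ht4
  exact this.congr_deriv (by ring)

/-- **Regularized Jacobi integral**: along a solution of the Levi-Civita regularized
system on which `r₂ > 0`, the quantity `u′² + v′² − W(u,v)` is constant; in particular,
on the zero level of this quantity, at a collision `u = v = 0` the velocity satisfies
`u′² + v′² = 8(1−μ)`. -/
theorem regularized_jacobi_integral (μ C : ℝ) (hμ : μ ∈ Set.Ioo (0:ℝ) 1)
    (I : Set ℝ) (hI : I.OrdConnected) (u v : ℝ → ℝ)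
    (hsol : IsLCSolOn μ C u v I)
    (hr2 : ∀ s ∈ I, 0 < lcR2 (u s) (v s)) :
    (∀ s₁ ∈ I, ∀ s₂ ∈ I,
      (deriv u s₁)^2 + (deriv v s₁)^2 - W μ C (u s₁) (v s₁) =
      (deriv u s₂)^2 + (deriv v s₂)^2 - W μ C (u s₂) (v s₂)) ∧
    ((∃ s₁ ∈ I, (deriv u s₁)^2 + (deriv v s₁)^2 = W μ C (u s₁) (v s₁)) →
      ∀ s₀ ∈ I, u s₀ = 0 → v s₀ = 0 →
        (deriv u s₀)^2 + (deriv v s₀)^2 = 8*(1-μ)) := by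
  have key : ∀ s ∈ I, HasDerivAt
      (fun t => (deriv u t)^2 + (deriv v t)^2 - W μ C (u t) (v t)) 0 s := by
    intro s hs
    obtain ⟨⟨hud, hvd, hu'd, hv'd⟩, hequ, heqv⟩ := hsol s hs
    have hrpos := hr2 s hs
    set a := u s with ha
    set b := v s with hb
    set a' := deriv u s with ha'
    set b' := deriv v s with hb'
    set a'' := deriv (deriv u) s with ha''
    set b'' := deriv (deriv v) s with hb''
    have hrne : lcR2 a b ≠ 0 := ne_of_gt hrpos
    have hu' : HasDerivAt (deriv u) a'' s := hu'd.hasDerivAt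
    have hv' : HasDerivAt (deriv v) b'' s := hv'd.hasDerivAt
    have hu'sq : HasDerivAt (fun t => (deriv u t)^2) (2*a'*a'') s := by
      simpa using hu'.fun_pow 2
    have hv'sq : HasDerivAt (fun t => (deriv v t)^2) (2*b'*b'') s := by
      simpa using hv'.fun_pow 2
    have hW := hasDerivAt_W_comp μ C u v s hud hvd hrpos
    have total := (hu'sq.fun_add hv'sq).fun_sub hW
    have e1 : a'' = 4*μ*a + 16*μ*a^3 + 12*(a^2+b^2)^2*a
        + 8*μ*a/lcR2 a b - 8*μ*a*(a^2+b^2)*(a^2+b^2+1)/(lcR2 a b)^3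
        - 4*C*a + 8*(a^2+b^2)*b' := by linarith
    have e2 : b'' = 4*μ*b - 16*μ*b^3 + 12*(a^2+b^2)^2*b
        + 8*μ*b/lcR2 a b - 8*μ*b*(a^2+b^2)*(a^2+b^2-1)/(lcR2 a b)^3
        - 4*C*b - 8*(a^2+b^2)*a' := by linarith
    have hzero : 2*a'*a'' + 2*b'*b''
        - ((4*(2*a*a' + 2*b*b'))*((1-μ)*(a^2+b^2)^2 + μ*((1+a^2-b^2)^2+4*a^2*b^2))
          + (4*(a^2+b^2))*((1-μ)*(2*(a^2+b^2)*(2*a*a' + 2*b*b')) + μ*(2*(1+a^2-b^2)*(2*a*a' - 2*b*b') + (4*(2*a*a')*b^2 + 4*a^2*(2*b*b'))))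
          + ((8*μ*(2*a*a' + 2*b*b')) * lcR2 a b
             - (8*μ*(a^2+b^2)) * ((2*(1+a^2-b^2)*(2*a*a' - 2*b*b') + (4*(2*a*a')*b^2 + 4*a^2*(2*b*b'))) / (2 * lcR2 a b))) / (lcR2 a b)^2
          - 4*C*(2*a*a' + 2*b*b')) = 0 := by
      rw [e1, e2]
      field_simp
      ring
    refine total.congr_deriv ?_
    rw [← ha, ← hb, ← ha', ← hb']
    linarith [hzero]
  have hconv : Convex ℝ I := hI.convex
  have const : ∀ s₁ ∈ I, ∀ s₂ ∈ I,
      (deriv u s₁)^2 + (deriv v s₁)^2 - W μ C (u s₁) (v s₁) =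
      (deriv u s₂)^2 + (deriv v s₂)^2 - W μ C (u s₂) (v s₂) := by
    intro s₁ h₁ s₂ h₂
    have hb := Convex.norm_image_sub_le_of_norm_hasDerivWithin_le
      (f := fun t => (deriv u t)^2 + (deriv v t)^2 - W μ C (u t) (v t))
      (f' := fun _ => 0) (C := 0)
      (fun x hx => (key x hx).hasDerivWithinAt)
      (fun x _ => by simp) hconv h₂ h₁
    simp only [norm_eq_abs, zero_mul] at hb
    have := abs_nonpos_iff.mp (le_of_le_of_eq hb rfl)
    linarith [abs_nonneg ((deriv u s₁)^2 + (deriv v s₁)^2 - W μ C (u s₁) (v s₁)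
      - ((deriv u s₂)^2 + (deriv v s₂)^2 - W μ C (u s₂) (v s₂))), this]
  refine ⟨const, ?_⟩
  rintro ⟨s₁, hs₁, h1⟩ s₀ hs₀ hu0 hv0
  have h := const s₀ hs₀ s₁ hs₁
  rw [h1] at h
  have hW0 : W μ C (u s₀) (v s₀) = 8*(1-μ) := by
    rw [hu0, hv0]
    norm_num [W, lcR2]
  linarith [h, hW0]

end
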